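/- Let G and H be two nonempty subsets of a strictly convex Banach space E having the Kadec–Klee property, where G is weakly compact and convex, and H is compact. Then the pair (G,H) has property strongly UC. -/

import Mathlib

open Metric Filter Set

/-- Distance between two sets: `σ(G,H) = inf {σ(u,v) : u ∈ G, v ∈ H}`. -/
noncomputable def setDist {E : Type*} [MetricSpace E] (G H : Set E) : ℝ :=
  sInf (Set.image2 dist G H)

/-- The pair `(G,H)` has property UC. -/
def PropUC {E : Type*} [MetricSpace E] (G H : Set E) : Prop :=
  ∀ u z v : ℕ → E, (∀ n, u n ∈ G) → (∀ n, z n ∈ G) → (∀ n, v n ∈ H) →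
    Tendsto (fun n => dist (u n) (v n)) atTop (nhds (setDist G H)) →
    Tendsto (fun n => dist (z n) (v n)) atTop (nhds (setDist G H)) →
    Tendsto (fun n => dist (u n) (z n)) atTop (nhds 0)

/-- The pair `(G,H)` has property strongly UC. -/
def PropSUC {E : Type*} [MetricSpace E] (G H : Set E) : Prop :=
  ∀ u z v : ℕ → E, (∀ n, u n ∈ G) → (∀ n, z n ∈ G) → (∀ n, v n ∈ H) →
    Tendsto (fun n => dist (u n) (v n) - Metric.infDist (v n) G) atTop (nhds 0) →
    Tendsto (fun n => dist (z n) (v n) - Metric.infDist (v n) G) atTop (nhds 0) →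
    Tendsto (fun n => dist (u n) (z n)) atTop (nhds 0)

section Aux

variable {E : Type*} [NormedAddCommGroup E] [NormedSpace ℝ E]

/-- The weak topology on a normed space is Hausdorff. -/
theorem weakSpace_t2 : T2Space (WeakSpace ℝ E) :=
  (WeakBilin.isEmbedding (B := (topDualPairing ℝ E).flip)
    (separatingDual_iff_injective.mp inferInstance)).t2Space

/-- A closed convex set is weakly closed. -/
theorem isClosed_weakImage {s : Set E} (hconv : Convex ℝ s) (hcl : IsClosed s) :
    IsClosed ((toWeakSpace ℝ E) '' s) := by
  have h := hconv.toWeakSpace_closure ℝ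
  rw [hcl.closure_eq] at h
  rw [h]
  exact isClosed_closure

/-- A weakly compact set is (norm) closed. -/
theorem isClosed_of_weakCompact {G : Set E} (hGwc : IsCompact ((toWeakSpace ℝ E) '' G)) :
    IsClosed G := by
  haveI : T2Space (WeakSpace ℝ E) := weakSpace_t2
  have h1 : IsClosed ((toWeakSpace ℝ E) '' G) := hGwc.isClosed
  have h2 : G = (toWeakSpaceCLM ℝ E) ⁻¹' ((toWeakSpace ℝ E) '' G) := by
    ext x
    simp only [Set.mem_preimage, toWeakSpaceCLM_eq_toWeakSpace]
    exact ((toWeakSpace ℝ E).injective.mem_set_image).symm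
  rw [h2]
  exact h1.preimage (toWeakSpaceCLM ℝ E).continuous

/-- Existence of a nearest point in a weakly compact convex set. -/
theorem exists_nearest (G : Set E) (hG : G.Nonempty)
    (hGwc : IsCompact ((toWeakSpace ℝ E) '' G)) (hGconv : Convex ℝ G) (v₀ : E) :
    ∃ p ∈ G, dist p v₀ = infDist v₀ G := by
  haveI : T2Space (WeakSpace ℝ E) := weakSpace_t2
  set d := infDist v₀ G with hd
  have hGcl : IsClosed G := isClosed_of_weakCompact hGwc
  set K : ℕ → Set E := fun k => G ∩ closedBall v₀ (d + 1 / (k + 1)) with hK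
  have hKne : ∀ k, (K k).Nonempty := by
    intro k
    have hpos : (0 : ℝ) < 1 / ((k : ℝ) + 1) := by positivity
    have : infDist v₀ G < d + 1 / (k + 1) := by rw [← hd]; linarith
    obtain ⟨y, hyG, hy⟩ := (infDist_lt_iff hG).mp this
    exact ⟨y, hyG, by rw [mem_closedBall, dist_comm]; exact hy.le⟩
  have hKconv : ∀ k, Convex ℝ (K k) := fun k => hGconv.inter (convex_closedBall _ _)
  have hKcl : ∀ k, IsClosed (K k) := fun k => hGcl.inter isClosed_closedBall
  have hKmono : ∀ k, K (k + 1) ⊆ K k := by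
    intro k
    apply Set.inter_subset_inter_right
    apply closedBall_subset_closedBall
    have h1 : (1 : ℝ) / ((k : ℝ) + 1 + 1) ≤ 1 / ((k : ℝ) + 1) := by
      apply one_div_le_one_div_of_le <;> [positivity; linarith]
    push_cast
    linarith
  set W : ℕ → Set (WeakSpace ℝ E) := fun k => (toWeakSpace ℝ E) '' (K k) with hW
  have hWc : ∀ k, IsCompact (W k) :=
    fun k => hGwc.of_isClosed_subset (isClosed_weakImage (hKconv k) (hKcl k))
      (Set.image_mono  Set.inter_subset_left)
  have hWcl : ∀ k, IsClosed (W k) := fun k => isClosed_weakImage (hKconv k) (hKcl k)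
  have hWne : ∀ k, (W k).Nonempty := fun k => (hKne k).image _
  have hWmono : ∀ k, W (k + 1) ⊆ W k := fun k => Set.image_mono  (hKmono k)
  obtain ⟨w, hw⟩ := IsCompact.nonempty_iInter_of_sequence_nonempty_isCompact_isClosed
    W hWmono hWne (hWc 0) hWcl
  set p := (toWeakSpace ℝ E).symm w with hp
  have hpK : ∀ k, p ∈ K k := by
    intro k
    have : w ∈ W k := Set.mem_iInter.mp hw k
    obtain ⟨y, hyK, hyw⟩ := this
    have : y = p := by rw [hp, ← hyw, LinearEquiv.symm_apply_apply]
    rwa [← this]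
  have hpG : p ∈ G := (hpK 0).1
  refine ⟨p, hpG, le_antisymm ?_ ?_⟩
  · by_contra hcon
    push_neg at hcon
    obtain ⟨k, hk⟩ := exists_nat_one_div_lt (sub_pos.mpr hcon)
    have := (hpK k).2
    rw [mem_closedBall] at this
    linarith
  · rw [hd, dist_comm]
    exact infDist_le_dist_of_mem hpG

/-- Uniqueness of the nearest point in a convex subset of a strictly convex space. -/
theorem nearest_unique [StrictConvexSpace ℝ E] {G : Set E} (hGconv : Convex ℝ G)
    {v₀ p q : E} (hpG : p ∈ G) (hpd : dist p v₀ = infDist v₀ G)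
    (hqG : q ∈ G) (hqd : dist q v₀ = infDist v₀ G) : q = p := by
  by_contra hne
  have hmem : (1 / 2 : ℝ) • q + (1 / 2 : ℝ) • p ∈ G :=
    hGconv hqG hpG (by norm_num) (by norm_num) (by norm_num)
  have h1 : ‖q - v₀‖ = ‖p - v₀‖ := by
    rw [← dist_eq_norm, ← dist_eq_norm, hpd, hqd]
  have h2 : ‖(1 / 2 : ℝ) • ((q - v₀) + (p - v₀))‖ < ‖q - v₀‖ := by
    refine (norm_midpoint_lt_iff h1).2 fun h => hne ?_
    have := sub_left_injective (G := E) (b := v₀) h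
    exact this
  have h3 : (1 / 2 : ℝ) • ((q - v₀) + (p - v₀)) =
      ((1 / 2 : ℝ) • q + (1 / 2 : ℝ) • p) - v₀ := by
    module
  rw [h3, ← dist_eq_norm] at h2
  rw [← dist_eq_norm, hqd] at h2
  have h4 : infDist v₀ G ≤ dist ((1 / 2 : ℝ) • q + (1 / 2 : ℝ) • p) v₀ := by
    rw [dist_comm]
    exact infDist_le_dist_of_mem hmem
  linarith

/-- Key convergence lemma: a minimizing sequence (with respect to a fixed point `v₀`)
in a weakly compact convex subset of a strictly convex space with the Kadec–Klee
property converges in norm to the nearest point. -/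
theorem tendsto_nearest [StrictConvexSpace ℝ E]
    (hKK : ∀ (x : ℕ → E) (x₀ : E),
      (∀ f : E →L[ℝ] ℝ, Tendsto (fun n => f (x n)) atTop (nhds (f x₀))) →
      Tendsto (fun n => ‖x n‖) atTop (nhds ‖x₀‖) →
      Tendsto x atTop (nhds x₀))
    (G : Set E) (hG : G.Nonempty)
    (hGwc : IsCompact ((toWeakSpace ℝ E) '' G)) (hGconv : Convex ℝ G)
    (v₀ p : E) (hpG : p ∈ G) (hpd : dist p v₀ = infDist v₀ G)
    (u : ℕ → E) (hu : ∀ n, u n ∈ G)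
    (hnorm : Tendsto (fun n => dist (u n) v₀) atTop (nhds (infDist v₀ G))) :
    Tendsto u atTop (nhds p) := by
  haveI : T2Space (WeakSpace ℝ E) := weakSpace_t2
  set d := infDist v₀ G with hd
  have hGcl : IsClosed G := isClosed_of_weakCompact hGwc
  set K : ℕ → Set E := fun k => G ∩ closedBall v₀ (d + 1 / (k + 1)) with hK
  have hKconv : ∀ k, Convex ℝ (K k) := fun k => hGconv.inter (convex_closedBall _ _)
  have hKcl : ∀ k, IsClosed (K k) := fun k => hGcl.inter isClosed_closedBall
  have hKmono : ∀ k, K (k + 1) ⊆ K k := by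
    intro k
    apply Set.inter_subset_inter_right
    apply closedBall_subset_closedBall
    have h1 : (1 : ℝ) / ((k : ℝ) + 1 + 1) ≤ 1 / ((k : ℝ) + 1) := by
      apply one_div_le_one_div_of_le <;> [positivity; linarith]
    push_cast
    linarith
  set W : ℕ → Set (WeakSpace ℝ E) := fun k => (toWeakSpace ℝ E) '' (K k) with hW
  have hWc : ∀ k, IsCompact (W k) :=
    fun k => hGwc.of_isClosed_subset (isClosed_weakImage (hKconv k) (hKcl k))
      (Set.image_mono  Set.inter_subset_left)
  have hWcl : ∀ k, IsClosed (W k) := fun k => isClosed_weakImage (hKconv k) (hKcl k)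
  have hWmono : ∀ k, W (k + 1) ⊆ W k := fun k => Set.image_mono  (hKmono k)
  -- Step 1: weak convergence of `u` to `p`.
  have hweak : Tendsto (fun n => toWeakSpace ℝ E (u n)) atTop (nhds (toWeakSpace ℝ E p)) := by
    rw [_root_.tendsto_nhds]
    intro U hU hpU
    have hsub : ∃ k, W k ⊆ U := by
      by_contra hcon
      push_neg at hcon
      have hne : ∀ k, ((W k) \ U).Nonempty := by
        intro k
        obtain ⟨a, haW, haU⟩ := Set.not_subset.mp (hcon k)
        exact ⟨a, haW, haU⟩
      obtain ⟨w, hw⟩ := IsCompact.nonempty_iInter_of_sequence_nonempty_isCompact_isClosed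
        (fun k => (W k) \ U) (fun k => Set.diff_subset_diff_left (hWmono k)) hne
        ((hWc 0).diff hU) (fun k => (hWcl k).sdiff hU)
      set q := (toWeakSpace ℝ E).symm w with hq
      have hqK : ∀ k, q ∈ K k := by
        intro k
        have : w ∈ W k := (Set.mem_iInter.mp hw k).1
        obtain ⟨y, hyK, hyw⟩ := this
        have : y = q := by rw [hq, ← hyw, LinearEquiv.symm_apply_apply]
        rwa [← this]
      have hqG : q ∈ G := (hqK 0).1
      have hqd : dist q v₀ = d := by
        refine le_antisymm ?_ ?_
        · by_contra hcon2
          push_neg at hcon2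
          obtain ⟨k, hk⟩ := exists_nat_one_div_lt (sub_pos.mpr hcon2)
          have := (hqK k).2
          rw [mem_closedBall] at this
          linarith
        · rw [hd, dist_comm]
          exact infDist_le_dist_of_mem hqG
      have hqp : q = p := nearest_unique hGconv hpG hpd hqG hqd
      have hwU : w ∉ U := (Set.mem_iInter.mp hw 0).2
      apply hwU
      have : toWeakSpace ℝ E q = w := by rw [hq, LinearEquiv.apply_symm_apply]
      rw [← this, hqp]
      exact hpU
    obtain ⟨k, hk⟩ := hsub
    have hpos : (0 : ℝ) < 1 / ((k : ℝ) + 1) := by positivity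
    have hev : ∀ᶠ n in atTop, dist (u n) v₀ ≤ d + 1 / (k + 1) :=
      hnorm.eventually_le_const (by linarith)
    filter_upwards [hev] with n hn
    exact hk ⟨u n, ⟨hu n, by rwa [mem_closedBall]⟩, rfl⟩
  -- Step 2: convergence of each functional.
  have hfun : ∀ f : E →L[ℝ] ℝ, Tendsto (fun n => f (u n)) atTop (nhds (f p)) := by
    intro f
    let f' : WeakSpace ℝ E →L[ℝ] ℝ :=
      { toLinearMap := (f : E →ₗ[ℝ] ℝ).comp ((toWeakSpace ℝ E).symm : WeakSpace ℝ E →ₗ[ℝ] E)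
        cont := WeakBilin.eval_continuous (topDualPairing ℝ E).flip _ }
    have hcont := (f'.continuous.tendsto (toWeakSpace ℝ E p)).comp hweak
    have hfp : f' (toWeakSpace ℝ E p) = f p := by
      show f ((toWeakSpace ℝ E).symm (toWeakSpace ℝ E p)) = f p
      rw [LinearEquiv.symm_apply_apply]
    have heq : ∀ n, f' (toWeakSpace ℝ E (u n)) = f (u n) := by
      intro n; show f ((toWeakSpace ℝ E).symm (toWeakSpace ℝ E (u n))) = f (u n)
      rw [LinearEquiv.symm_apply_apply]
    rw [← hfp]
    refine hcont.congr fun n => ?_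
    exact heq n
  -- Step 3: apply the Kadec–Klee property.
  have h1 : ∀ f : E →L[ℝ] ℝ,
      Tendsto (fun n => f (u n - v₀)) atTop (nhds (f (p - v₀))) := by
    intro f
    simp only [map_sub]
    exact (hfun f).sub_const _
  have h2 : Tendsto (fun n => ‖u n - v₀‖) atTop (nhds ‖p - v₀‖) := by
    have : ‖p - v₀‖ = d := by rw [← dist_eq_norm, hpd]
    rw [this]
    simpa only [dist_eq_norm] using hnorm
  have h3 := hKK (fun n => u n - v₀) (p - v₀) h1 h2
  have h4 := h3.add_const v₀
  simp only [sub_add_cancel] at h4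
  exact h4

end Aux

/-- Let `G` and `H` be nonempty subsets of a strictly convex Banach space with the
Kadec–Klee property, where `G` is weakly compact and convex and `H` is compact.
Then `(G,H)` has property strongly UC. -/
theorem propSUC_of_kadecKlee {E : Type*} [NormedAddCommGroup E] [NormedSpace ℝ E]
    [CompleteSpace E] [StrictConvexSpace ℝ E]
    (hKK : ∀ (x : ℕ → E) (x₀ : E),
      (∀ f : E →L[ℝ] ℝ, Tendsto (fun n => f (x n)) atTop (nhds (f x₀))) →
      Tendsto (fun n => ‖x n‖) atTop (nhds ‖x₀‖) →
      Tendsto x atTop (nhds x₀))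
    (G H : Set E) (hG : G.Nonempty) (hH : H.Nonempty)
    (hGwc : IsCompact ((toWeakSpace ℝ E) '' G)) (hGconv : Convex ℝ G)
    (hHc : IsCompact H) : PropSUC G H := by
  intro u z v hu hz hv huv hzv
  apply tendsto_of_subseq_tendsto
  intro ns hns
  obtain ⟨v₀, hv₀H, φ, hφ, hvconv⟩ := hHc.tendsto_subseq (fun n => hv (ns n))
  refine ⟨φ, ?_⟩
  set w : ℕ → ℕ := fun n => ns (φ n) with hwdef
  have hwT : Tendsto w atTop atTop := hns.comp hφ.tendsto_atTop
  have hvc : Tendsto (fun n => v (w n)) atTop (nhds v₀) := hvconv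
  have hvd : Tendsto (fun n => dist (v (w n)) v₀) atTop (nhds 0) :=
    tendsto_iff_dist_tendsto_zero.mp hvc
  have hd : Tendsto (fun n => infDist (v (w n)) G) atTop (nhds (infDist v₀ G)) :=
    ((continuous_infDist_pt G).tendsto v₀).comp hvc
  obtain ⟨p, hpG, hpd⟩ := exists_nearest G hG hGwc hGconv v₀
  have key : ∀ (u : ℕ → E), (∀ n, u n ∈ G) →
      Tendsto (fun n => dist (u n) (v n) - infDist (v n) G) atTop (nhds 0) →
      Tendsto (fun n => u (w n)) atTop (nhds p) := by
    intro y hy hyv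
    have hyv' : Tendsto (fun n => dist (y (w n)) (v (w n)) - infDist (v (w n)) G)
        atTop (nhds 0) := hyv.comp hwT
    have hupper : Tendsto (fun n =>
        (dist (y (w n)) (v (w n)) - infDist (v (w n)) G) + infDist (v (w n)) G
          + dist (v (w n)) v₀) atTop (nhds (infDist v₀ G)) := by
      have := (hyv'.add hd).add hvd
      simpa using this
    have hlow : ∀ n, infDist v₀ G ≤ dist (y (w n)) v₀ := by
      intro n
      rw [dist_comm]
      exact infDist_le_dist_of_mem (hy (w n))
    have hup : ∀ n, dist (y (w n)) v₀ ≤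
        (dist (y (w n)) (v (w n)) - infDist (v (w n)) G) + infDist (v (w n)) G
          + dist (v (w n)) v₀ := by
      intro n
      have := dist_triangle (y (w n)) (v (w n)) v₀
      linarith
    have hnorm : Tendsto (fun n => dist (y (w n)) v₀) atTop (nhds (infDist v₀ G)) :=
      tendsto_of_tendsto_of_tendsto_of_le_of_le tendsto_const_nhds hupper hlow hup
    exact tendsto_nearest hKK G hG hGwc hGconv v₀ p hpG hpd (fun n => y (w n))
      (fun n => hy (w n)) hnorm
  have h1 := key u hu huv
  have h2 := key z hz hzv
  have := h1.dist h2
  simpa using this
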